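/- For every ε > 0 there exists ρ(ε) > 0 such that for every ρ ∈ (0, ρ(ε)) and every connected graph G of girth at least 5 and maximum degree at least 1/ρ, there is a φ_ρ-dynamic monopoly of G of size at most (2+ε)ρ·n(G). -/

import Mathlib

open scoped Classical

variable {V : Type*} [Fintype V]

/-- A set `S` is closed for `(G, φ)`: every vertex outside `S` has fewer than
`φ u` neighbors inside `S`. -/
def IsClosedSet (G : SimpleGraph V) (φ : V → ℕ) (S : Finset V) : Prop :=
  ∀ u ∉ S, (S.filter (fun w => G.Adj u w)).card < φ u

/-- The closure `H(D)`: the intersection of all closed supersets of `D`. -/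
noncomputable def Hcl (G : SimpleGraph V) (φ : V → ℕ) (D : Finset V) : Finset V :=
  Finset.univ.filter (fun v => ∀ S : Finset V, D ⊆ S → IsClosedSet G φ S → v ∈ S)

section Aux

open SimpleGraph Finset

omit [Fintype V] in
lemma aux_girth_ge_of_cycle {G : SimpleGraph V} {a : V} (w : G.Walk a a) (hc : w.IsCycle)
    (h : 5 ≤ G.girth) : 5 ≤ w.length := by
  have h1 : G.egirth ≤ w.length :=
    le_trans (iInf_le _ a) (le_trans (iInf_le _ w) (iInf_le _ hc))
  have h2 : G.girth ≤ w.length := by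
    have := ENat.toNat_le_toNat h1 (by simp)
    simpa [SimpleGraph.girth] using this
  omega

omit [Fintype V] in
lemma aux_no_c3 {G : SimpleGraph V} (h : 5 ≤ G.girth) {a b c : V}
    (hab : G.Adj a b) (hbc : G.Adj b c) (hca : G.Adj c a) : False := by
  have hcyc : (Walk.cons hab (Walk.cons hbc (Walk.cons hca Walk.nil))).IsCycle := by
    rw [Walk.isCycle_def, Walk.isTrail_def]
    have h1 := hab.ne; have h2 := hbc.ne; have h3 := hca.ne
    refine ⟨?_, by simp, ?_⟩ <;> simp [Sym2.eq_iff] <;> aesop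
  have := aux_girth_ge_of_cycle _ hcyc h
  simp only [Walk.length_cons, Walk.length_nil] at this
  omega

omit [Fintype V] in
lemma aux_no_c4 {G : SimpleGraph V} (h : 5 ≤ G.girth) {a b c d : V}
    (hab : G.Adj a b) (hbc : G.Adj b c) (hcd : G.Adj c d) (hda : G.Adj d a)
    (hac : a ≠ c) (hbd : b ≠ d) : False := by
  have hcyc :
      (Walk.cons hab (Walk.cons hbc (Walk.cons hcd (Walk.cons hda Walk.nil)))).IsCycle := by
    rw [Walk.isCycle_def, Walk.isTrail_def]
    have h1 := hab.ne; have h2 := hbc.ne; have h3 := hcd.ne; have h4 := hda.ne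
    refine ⟨?_, by simp, ?_⟩ <;> simp [Sym2.eq_iff] <;> aesop
  have := aux_girth_ge_of_cycle _ hcyc h
  simp only [Walk.length_cons, Walk.length_nil] at this
  omega

omit [Fintype V] in
lemma aux_mem_of_low {G : SimpleGraph V} {φ : V → ℕ} {S : Finset V}
    (hS : IsClosedSet G φ S) {x s : V} (hx : φ x ≤ 1) (hs : s ∈ S)
    (hadj : G.Adj x s) : x ∈ S := by
  by_contra h
  have h1 := hS x h
  have h2 : s ∈ S.filter (fun w => G.Adj x w) := by simp [hs, hadj]
  have := Finset.card_pos.mpr ⟨s, h2⟩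
  omega

lemma aux_closed_eq_univ {G : SimpleGraph V} {φ : V → ℕ} {S : Finset V}
    (hG : G.Connected) (hS : IsClosedSet G φ S) {s₀ : V} (hs₀ : s₀ ∈ S)
    (hHi : ∀ u, 2 ≤ φ u → u ∈ S) : S = Finset.univ := by
  have key : ∀ a b : V, G.Walk a b → a ∈ S → b ∈ S := by
    intro a b p
    induction p with
    | nil => exact id
    | @cons u v w hadj p ih =>
      intro ha
      apply ih
      by_cases hH : 2 ≤ φ v
      · exact hHi _ hH
      · exact aux_mem_of_low hS (by omega) ha hadj.symm
  apply Finset.eq_univ_of_forall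
  intro v
  exact key s₀ v (hG.preconnected s₀ v).some hs₀

noncomputable def rk (π : V ≃ Fin (Fintype.card V)) (A : Finset V) (u : V) : ℕ :=
  (A.filter (fun w => π w ≤ π u)).card

lemma rk_ge_one {π : V ≃ Fin (Fintype.card V)} {A : Finset V} {u : V} (hu : u ∈ A) :
    1 ≤ rk π A u :=
  Finset.card_pos.mpr ⟨u, by simp [rk, hu]⟩

lemma rk_le_card {π : V ≃ Fin (Fintype.card V)} {A : Finset V} (u : V) :
    rk π A u ≤ A.card :=
  Finset.card_le_card (Finset.filter_subset _ _)

lemma rk_lt_of_lt {π : V ≃ Fin (Fintype.card V)} {A : Finset V} {a b : V}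
    (hb : b ∈ A) (hab : π a < π b) : rk π A a < rk π A b := by
  apply Finset.card_lt_card
  constructor
  · intro w hw
    simp only [Finset.mem_filter] at hw ⊢
    exact ⟨hw.1, le_trans hw.2 (le_of_lt hab)⟩
  · intro hsub
    have hbmem : b ∈ A.filter (fun w => π w ≤ π b) := by simp [hb]
    have := hsub hbmem
    simp only [Finset.mem_filter] at this
    exact absurd this.2 (by simpa using hab)

lemma rk_injOn {π : V ≃ Fin (Fintype.card V)} {A : Finset V} {a b : V}
    (ha : a ∈ A) (hb : b ∈ A) (h : rk π A a = rk π A b) : a = b := by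
  by_contra hne
  have : π a ≠ π b := fun hh => hne (π.injective hh)
  rcases lt_or_gt_of_ne this with hlt | hlt
  · exact absurd h (Nat.ne_of_lt (rk_lt_of_lt hb hlt))
  · exact absurd h.symm (Nat.ne_of_lt (rk_lt_of_lt ha hlt))

lemma rk_exists_unique (π : V ≃ Fin (Fintype.card V)) (A : Finset V) {j : ℕ}
    (hj : j ∈ Finset.Icc 1 A.card) : (A.filter (fun a => rk π A a = j)).card = 1 := by
  have himg : A.image (fun a => rk π A a) = Finset.Icc 1 A.card := by
    apply Finset.eq_of_subset_of_card_le
    · intro x hx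
      simp only [Finset.mem_image] at hx
      obtain ⟨a, ha, rfl⟩ := hx
      simp [Finset.mem_Icc, rk_ge_one ha, rk_le_card a]
    · rw [Nat.card_Icc]
      have : (A.image (fun a => rk π A a)).card = A.card :=
        Finset.card_image_of_injOn (fun a ha b hb h => rk_injOn ha hb h)
      omega
  have hjimg : j ∈ A.image (fun a => rk π A a) := himg ▸ hj
  simp only [Finset.mem_image] at hjimg
  obtain ⟨a, ha, hrka⟩ := hjimg
  rw [Finset.card_eq_one]
  refine ⟨a, ?_⟩
  ext b
  simp only [Finset.mem_filter, Finset.mem_singleton]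
  constructor
  · rintro ⟨hbA, hrkb⟩
    exact rk_injOn hbA ha (hrkb.trans hrka.symm)
  · rintro rfl
    exact ⟨ha, hrka⟩

lemma rk_swap (π : V ≃ Fin (Fintype.card V)) {A : Finset V} {u a : V}
    (hu : u ∈ A) (ha : a ∈ A) :
    rk ((Equiv.swap u a).trans π) A a = rk π A u := by
  unfold rk
  have h0 : (Equiv.swap u a) a = u := Equiv.swap_apply_right u a
  simp only [Equiv.trans_apply, h0]
  apply Finset.card_nbij' (i := fun w => Equiv.swap u a w) (j := fun w => Equiv.swap u a w)
  · intro x hx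
    simp only [Finset.mem_coe, Finset.mem_filter] at hx ⊢
    refine ⟨?_, by simpa [Equiv.swap_apply_self] using hx.2⟩
    rcases eq_or_ne x u with rfl | hxu
    · simpa [Equiv.swap_apply_left] using ha
    rcases eq_or_ne x a with rfl | hxa
    · simpa [Equiv.swap_apply_right] using hu
    · simpa [Equiv.swap_apply_of_ne_of_ne hxu hxa] using hx.1
  · intro x hx
    simp only [Finset.mem_coe, Finset.mem_filter] at hx ⊢
    refine ⟨?_, ?_⟩
    · rcases eq_or_ne x u with rfl | hxu
      · simpa [Equiv.swap_apply_left] using ha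
      rcases eq_or_ne x a with rfl | hxa
      · simpa [Equiv.swap_apply_right] using hu
      · simpa [Equiv.swap_apply_of_ne_of_ne hxu hxa] using hx.1
    · simpa [Equiv.swap_apply_self] using hx.2
  · intro x _; simp [Equiv.swap_apply_self]
  · intro x _; simp [Equiv.swap_apply_self]

lemma count_rk_eq (A : Finset V) {u a : V} (hu : u ∈ A) (ha : a ∈ A) (j : ℕ) :
    (Finset.univ.filter (fun π : V ≃ Fin (Fintype.card V) => rk π A u = j)).card =
    (Finset.univ.filter (fun π : V ≃ Fin (Fintype.card V) => rk π A a = j)).card := by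
  apply Finset.card_nbij' (i := fun π => (Equiv.swap u a).trans π)
    (j := fun π => (Equiv.swap u a).trans π)
  · intro π hπ
    simp only [Finset.mem_coe, Finset.mem_filter, Finset.mem_univ, true_and] at hπ ⊢
    rw [rk_swap π hu ha]; exact hπ
  · intro π hπ
    simp only [Finset.mem_coe, Finset.mem_filter, Finset.mem_univ, true_and] at hπ ⊢
    have := rk_swap ((Equiv.swap u a).trans π) hu ha
    have heq : (Equiv.swap u a).trans ((Equiv.swap u a).trans π) = π := by
      ext x; simp [Equiv.swap_apply_self]
    rw [heq] at this
    rw [← this]; exact hπ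
  · intro π _; ext x; simp [Equiv.swap_apply_self]
  · intro π _; ext x; simp [Equiv.swap_apply_self]

lemma count_rk_fixed (A : Finset V) {u : V} (hu : u ∈ A) {j : ℕ}
    (hj : j ∈ Finset.Icc 1 A.card) :
    A.card * (Finset.univ.filter (fun π : V ≃ Fin (Fintype.card V) => rk π A u = j)).card =
      Fintype.card (V ≃ Fin (Fintype.card V)) := by
  calc A.card * (Finset.univ.filter (fun π : V ≃ Fin (Fintype.card V) => rk π A u = j)).card
      = ∑ a ∈ A, (Finset.univ.filter (fun π : V ≃ Fin (Fintype.card V) => rk π A a = j)).card := by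
        rw [Finset.sum_congr rfl (fun a ha => (count_rk_eq A hu ha j).symm)]
        simp [Finset.sum_const, mul_comm]
    _ = ∑ a ∈ A, ∑ π : V ≃ Fin (Fintype.card V), (if rk π A a = j then 1 else 0) := by
        refine Finset.sum_congr rfl (fun a _ => ?_)
        rw [Finset.card_filter]
    _ = ∑ π : V ≃ Fin (Fintype.card V), ∑ a ∈ A, (if rk π A a = j then 1 else 0) :=
        Finset.sum_comm
    _ = ∑ π : V ≃ Fin (Fintype.card V), (A.filter (fun a => rk π A a = j)).card := by
        refine Finset.sum_congr rfl (fun π _ => ?_)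
        rw [Finset.card_filter]
    _ = ∑ _π : V ≃ Fin (Fintype.card V), 1 :=
        Finset.sum_congr rfl (fun π _ => rk_exists_unique π A hj)
    _ = Fintype.card (V ≃ Fin (Fintype.card V)) := by simp

lemma count_rk_le (A : Finset V) {u : V} (hu : u ∈ A) (t : ℕ) :
    A.card * (Finset.univ.filter (fun π : V ≃ Fin (Fintype.card V) => rk π A u ≤ t)).card ≤
      t * Fintype.card (V ≃ Fin (Fintype.card V)) := by
  have hsplit : Finset.univ.filter (fun π : V ≃ Fin (Fintype.card V) => rk π A u ≤ t) =
      (Finset.Icc 1 (min t A.card)).biUnion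
        (fun j => Finset.univ.filter (fun π : V ≃ Fin (Fintype.card V) => rk π A u = j)) := by
    ext π
    simp only [Finset.mem_filter, Finset.mem_univ, true_and, Finset.mem_biUnion, Finset.mem_Icc]
    constructor
    · intro h
      exact ⟨rk π A u, ⟨⟨rk_ge_one hu, le_min h (rk_le_card u)⟩, rfl⟩⟩
    · rintro ⟨j, ⟨⟨_, hj2⟩, rfl⟩⟩
      exact le_trans hj2 (min_le_left _ _)
  have hdisj : ∀ j1 ∈ Finset.Icc 1 (min t A.card), ∀ j2 ∈ Finset.Icc 1 (min t A.card), j1 ≠ j2 →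
      Disjoint (Finset.univ.filter (fun π : V ≃ Fin (Fintype.card V) => rk π A u = j1))
        (Finset.univ.filter (fun π : V ≃ Fin (Fintype.card V) => rk π A u = j2)) := by
    intro j1 _ j2 _ hne
    simp only [Finset.disjoint_left, Finset.mem_filter]
    rintro π ⟨_, h1⟩ ⟨_, h2⟩
    exact hne (h1 ▸ h2 ▸ rfl)
  rw [hsplit, Finset.card_biUnion hdisj, Finset.mul_sum]
  calc ∑ j ∈ Finset.Icc 1 (min t A.card),
        A.card * (Finset.univ.filter (fun π : V ≃ Fin (Fintype.card V) => rk π A u = j)).card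
      = ∑ _j ∈ Finset.Icc 1 (min t A.card), Fintype.card (V ≃ Fin (Fintype.card V)) := by
        refine Finset.sum_congr rfl (fun j hj => ?_)
        refine count_rk_fixed A hu ?_
        simp only [Finset.mem_Icc] at hj ⊢
        omega
    _ = (min t A.card) * Fintype.card (V ≃ Fin (Fintype.card V)) := by
        simp [Nat.card_Icc]
    _ ≤ t * Fintype.card (V ≃ Fin (Fintype.card V)) :=
        Nat.mul_le_mul_right _ (min_le_left _ _)

end Aux

lemma aux_sizebound (ρ ε : ℝ) (hρ : 0 < ρ) (hε : 0 < ε) (h n sp : ℝ)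
    (h0 : 0 ≤ h) (hhn : h ≤ n) (hsp : sp ≤ n - h) :
    2 * ρ * h + ρ * sp ≤ (2 + ε) * ρ * n := by
  nlinarith [mul_nonneg hρ.le h0, mul_nonneg hρ.le (sub_nonneg.mpr hhn),
    mul_nonneg (mul_nonneg hε.le hρ.le) (le_trans h0 hhn),
    mul_le_mul_of_nonneg_left hsp hρ.le]

lemma aux_peru (ρ : ℝ) (hρ : 0 < ρ) (c N k p d t : ℕ)
    (hkpd : k + p = d) (hρd : 1 < ρ * d) (hφle : (t : ℝ) ≤ ρ * d + 1)
    (hcN : c ≤ N) (hckN : (k + 1) * c ≤ t * N) :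
    (c : ℝ) ≤ (2 * ρ + ρ * p) * N := by
  have hNr : (0:ℝ) ≤ N := Nat.cast_nonneg N
  by_cases hk : k = 0
  · have hpd : p = d := by omega
    have hcNr : (c:ℝ) ≤ N := Nat.cast_le.mpr hcN
    have hρp : 1 < ρ * p := by rw [hpd]; exact hρd
    nlinarith
  · have hk1 : 1 ≤ k := Nat.one_le_iff_ne_zero.mpr hk
    have hckNr : ((k:ℝ) + 1) * c ≤ (t : ℝ) * N := by exact_mod_cast hckN
    have hdr : (d:ℝ) = (k:ℝ) + (p:ℝ) := by exact_mod_cast hkpd.symm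
    have hpr : (0:ℝ) ≤ p := Nat.cast_nonneg p
    have hkr : (1:ℝ) ≤ k := by exact_mod_cast hk1
    have h1 : (ρ * d + 1) ≤ (2 * ρ + ρ * p) * ((k:ℝ) + 1) := by
      have hterm : (0:ℝ) ≤ ρ * p * ((k:ℝ) - 1) :=
        mul_nonneg (mul_nonneg hρ.le hpr) (by linarith)
      nlinarith
    have hpos : (0:ℝ) < (k:ℝ) + 1 := by linarith
    have h2 : ((k:ℝ) + 1) * c ≤ ((k:ℝ) + 1) * ((2 * ρ + ρ * p) * N) := by
      have hstep : (t : ℝ) * N ≤ (2 * ρ + ρ * p) * ((k:ℝ) + 1) * N :=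
        mul_le_mul_of_nonneg_right (le_trans hφle h1) hNr
      calc ((k:ℝ) + 1) * c ≤ (t : ℝ) * N := hckNr
        _ ≤ (2 * ρ + ρ * p) * ((k:ℝ) + 1) * N := hstep
        _ = ((k:ℝ) + 1) * ((2 * ρ + ρ * p) * N) := by ring
    exact le_of_mul_le_mul_left h2 hpos

theorem stmt19 :
    ∀ ε : ℝ, 0 < ε → ∃ ρε : ℝ, 0 < ρε ∧
      ∀ ρ : ℝ, 0 < ρ → ρ < ρε →
        ∀ (W : Type) [Fintype W] (G : SimpleGraph W), G.Connected → 5 ≤ G.girth →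
          (1 : ℝ) / ρ ≤ (G.maxDegree : ℝ) →
          ∃ D : Finset W,
            Hcl G (fun u => ⌈ρ * (G.degree u : ℝ)⌉₊) D = Finset.univ ∧
            (D.card : ℝ) ≤ (2 + ε) * ρ * Fintype.card W := by
  intro ε hε
  refine ⟨1, one_pos, ?_⟩
  intro ρ hρ hρ1 W _ G hconn hg hΔ
  classical
  set n : ℕ := Fintype.card W with hn
  set φ : W → ℕ := fun u => ⌈ρ * (G.degree u : ℝ)⌉₊ with hφdef
  -- basic facts
  have hρinv : (0:ℝ) < 1/ρ := by positivity
  have hW : Nonempty W := by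
    by_contra h
    rw [not_nonempty_iff] at h
    have h0 : G.maxDegree = 0 := by
      simp only [SimpleGraph.maxDegree, Finset.univ_eq_empty, Finset.image_empty]
      rfl
    rw [h0] at hΔ
    norm_num at hΔ
    linarith
  have hΔn : (G.maxDegree : ℝ) < n := by
    exact_mod_cast G.maxDegree_lt_card_verts
  have hρn : 1 < ρ * n := by
    have h1 : ρ * (1/ρ) ≤ ρ * G.maxDegree := by
      apply mul_le_mul_of_nonneg_left hΔ hρ.le
    rw [mul_one_div_cancel hρ.ne'] at h1
    nlinarith
  set Hi : Finset W := Finset.univ.filter (fun u => 2 ≤ φ u) with hHidef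
  by_cases hHiE : Hi = ∅
  · -- no high vertices: a single vertex suffices
    obtain ⟨v⟩ := hW
    refine ⟨{v}, ?_, ?_⟩
    · apply Finset.eq_univ_of_forall
      intro w
      rw [Hcl, Finset.mem_filter]
      refine ⟨Finset.mem_univ w, fun S hDS hcl => ?_⟩
      have hv : v ∈ S := hDS (Finset.mem_singleton_self v)
      have hU : S = Finset.univ :=
        aux_closed_eq_univ hconn hcl hv (fun u h2 => by
          exfalso
          have : u ∈ Hi := by
            rw [hHidef, Finset.mem_filter]; exact ⟨Finset.mem_univ u, h2⟩
          rw [hHiE] at this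
          simp at this)
      rw [hU]; exact Finset.mem_univ w
    · simp only [Finset.card_singleton, Nat.cast_one]
      nlinarith
  · -- main case
    obtain ⟨u₀, hu₀⟩ := Finset.nonempty_of_ne_empty hHiE
    -- helper predicate and sets
    set P : W → W → Prop := fun u y => y ∈ Hi ∨ ∃ w', w' ∈ Hi ∧ w' ≠ u ∧ G.Adj w' y with hPdef
    set K : W → Finset W := fun u => (G.neighborFinset u).filter (P u) with hKdef
    set Pr : W → Finset W := fun u => (G.neighborFinset u).filter (fun y => ¬ P u y) with hPrdef
    -- representative function
    have hrepex : ∀ u x : W, ∃ w : W,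
        x ∈ K u → (w ∈ Hi ∧ w ≠ u ∧ (w = x ∨ (x ∉ Hi ∧ G.Adj w x))) := by
      intro u x
      by_cases hx : x ∈ K u
      · rw [hKdef] at hx
        simp only [Finset.mem_filter, SimpleGraph.mem_neighborFinset] at hx
        by_cases hxHi : x ∈ Hi
        · exact ⟨x, fun _ => ⟨hxHi, hx.1.ne', Or.inl rfl⟩⟩
        · rcases hx.2 with h | ⟨w, hw1, hw2, hw3⟩
          · exact absurd h hxHi
          · exact ⟨w, fun _ => ⟨hw1, hw2, Or.inr ⟨hxHi, hw3⟩⟩⟩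
      · exact ⟨u, fun h => absurd h hx⟩
    choose r hr using hrepex
    have hKadj : ∀ {u x : W}, x ∈ K u → G.Adj u x := by
      intro u x hx
      rw [hKdef] at hx
      simp only [Finset.mem_filter, SimpleGraph.mem_neighborFinset] at hx
      exact hx.1
    have hrHi : ∀ {u x : W}, x ∈ K u → r u x ∈ Hi := fun hx => ((hr _ _ hx).1)
    have hrne : ∀ {u x : W}, x ∈ K u → r u x ≠ u := fun hx => ((hr _ _ hx).2.1)
    have hropt : ∀ {u x : W}, x ∈ K u → (r u x = x ∨ (x ∉ Hi ∧ G.Adj (r u x) x)) :=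
      fun hx => ((hr _ _ hx).2.2)
    -- injectivity of r u on K u (uses girth ≥ 5)
    have hinj : ∀ u : W, Set.InjOn (r u) (K u) := by
      intro u x hx y hy hxy
      by_contra hne
      have hax : G.Adj u x := hKadj hx
      have hay : G.Adj u y := hKadj hy
      rcases hropt hx with h1 | ⟨hx1, hx2⟩
      · rcases hropt hy with h2 | ⟨hy1, hy2⟩
        · exact hne (h1 ▸ h2 ▸ hxy)
        · -- r u y = r u x = x adjacent to y : triangle u x y
          have : G.Adj x y := by rw [← h1, hxy]; exact hy2
          exact aux_no_c3 hg hax this hay.symm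
      · rcases hropt hy with h2 | ⟨hy1, hy2⟩
        · have : G.Adj y x := by rw [← h2, ← hxy]; exact hx2
          exact aux_no_c3 hg hay this hax.symm
        · -- 4-cycle u - x - w - y - u
          have hw : G.Adj x (r u x) := hx2.symm
          have hw2 : G.Adj (r u x) y := by rw [hxy]; exact hy2
          exact aux_no_c4 hg hax hw hw2 hay.symm (hrne hx).symm hne
    have hrmemK : ∀ {u x : W}, x ∈ K u → r u x ∈ (Hi : Finset W) := fun hx => hrHi hx
    -- R and A
    set R : W → Finset W := fun u => (K u).image (r u) with hRdef
    set A : W → Finset W := fun u => insert u (R u) with hAdef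
    have huR : ∀ u : W, u ∉ R u := by
      intro u hu
      rw [hRdef] at hu
      simp only [Finset.mem_image] at hu
      obtain ⟨x, hx, hrx⟩ := hu
      exact hrne hx hrx
    have hcardA : ∀ u : W, (A u).card = (K u).card + 1 := by
      intro u
      rw [hAdef]
      simp only
      rw [Finset.card_insert_of_notMem (huR u), hRdef]
      simp only
      rw [Finset.card_image_of_injOn (hinj u)]
    have huA : ∀ u : W, u ∈ A u := fun u => Finset.mem_insert_self u (R u)
    -- D
    set Dπ : (W ≃ Fin n) → Finset W := fun π =>
      Hi.filter (fun u => ((K u).filter (fun x => π (r u x) < π u)).card < φ u) with hDdef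
    -- Part 1 : each Dπ is a dynamic monopoly
    have part1 : ∀ π : (W ≃ Fin n), ∀ S : Finset W, Dπ π ⊆ S → IsClosedSet G φ S →
        S = Finset.univ := by
      intro π S hDS hcl
      have key : ∀ N : ℕ, ∀ u, u ∈ Hi → (π u : ℕ) < N → u ∈ S := by
        intro N
        induction N with
        | zero => intro u _ h; omega
        | succ N ih =>
          intro u huHi hlt
          by_cases hcase : (π u : ℕ) < N
          · exact ih u huHi hcase
          have hπu : (π u : ℕ) = N := by omega
          by_cases hD : u ∈ Dπ π
          · exact hDS hD
          have hcond : φ u ≤ ((K u).filter (fun x => π (r u x) < π u)).card := by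
            rw [hDdef] at hD
            simp only [Finset.mem_filter, huHi, true_and, not_lt] at hD
            exact hD
          have hXsub : (K u).filter (fun x => π (r u x) < π u) ⊆
              S.filter (fun w => G.Adj u w) := by
            intro x hx
            simp only [Finset.mem_filter] at hx
            obtain ⟨hxK, hxlt⟩ := hx
            have hrS : r u x ∈ S := by
              refine ih (r u x) (hrHi hxK) ?_
              omega
            have hxS : x ∈ S := by
              rcases hropt hxK with heq | ⟨hxHi, hadj⟩
              · rw [← heq]; exact hrS
              · refine aux_mem_of_low hcl ?_ hrS hadj.symm
                have : ¬ 2 ≤ φ x := by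
                  intro h2
                  exact hxHi (by rw [hHidef, Finset.mem_filter]; exact ⟨Finset.mem_univ x, h2⟩)
                omega
            simp only [Finset.mem_filter]
            exact ⟨hxS, hKadj hxK⟩
          by_contra huS
          have h1 := hcl u huS
          have h2 := Finset.card_le_card hXsub
          omega
      have hHiS : ∀ u ∈ Hi, u ∈ S := fun u hu => key ((π u : ℕ) + 1) u hu (by omega)
      exact aux_closed_eq_univ hconn hcl (hHiS u₀ hu₀)
        (fun u h2 => hHiS u (by rw [hHidef, Finset.mem_filter]; exact ⟨Finset.mem_univ u, h2⟩))
    -- Part 2 : counting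
    haveI hNE : Nonempty (W ≃ Fin (Fintype.card W)) := ⟨Fintype.equivFin W⟩
    set N : ℕ := Fintype.card (W ≃ Fin (Fintype.card W)) with hNdef
    have hNpos : 0 < N := Fintype.card_pos
    set cnt : W → ℕ := fun u => (Finset.univ.filter (fun π : W ≃ Fin (Fintype.card W) =>
        ((K u).filter (fun x => π (r u x) < π u)).card < φ u)).card with hcntdef
    -- degree splitting
    have hsplitdeg : ∀ u : W, (K u).card + (Pr u).card = G.degree u := by
      intro u
      rw [hKdef, hPrdef]
      simp only
      rw [Finset.card_filter_add_card_filter_not]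
      exact G.card_neighborFinset_eq_degree u
    -- event reformulation via rank
    have hevent : ∀ (u : W) (π : W ≃ Fin (Fintype.card W)),
        (((K u).filter (fun x => π (r u x) < π u)).card < φ u) ↔ rk π (A u) u ≤ φ u := by
      intro u π
      have himg : ((K u).filter (fun x => π (r u x) < π u)).image (r u)
          = (R u).filter (fun w => π w < π u) := by
        ext w
        constructor
        · intro hw
          rw [Finset.mem_image] at hw
          obtain ⟨x, hx, rfl⟩ := hw
          rw [Finset.mem_filter] at hx ⊢
          refine ⟨?_, hx.2⟩
          rw [hRdef]
          exact Finset.mem_image_of_mem _ hx.1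
        · intro hw
          rw [Finset.mem_filter] at hw
          obtain ⟨hwR, hlt⟩ := hw
          rw [hRdef] at hwR
          simp only [Finset.mem_image] at hwR
          obtain ⟨x, hx, rfl⟩ := hwR
          rw [Finset.mem_image]
          exact ⟨x, Finset.mem_filter.mpr ⟨hx, hlt⟩, rfl⟩
      have hcardeq : ((K u).filter (fun x => π (r u x) < π u)).card
          = ((R u).filter (fun w => π w < π u)).card := by
        rw [← himg]
        exact (Finset.card_image_of_injOn ((hinj u).mono (by
          intro x hx
          simp only [Finset.mem_coe, Finset.mem_filter] at hx
          exact hx.1))).symm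
      have hfilterA : (A u).filter (fun w => π w ≤ π u)
          = insert u ((R u).filter (fun w => π w < π u)) := by
        rw [hAdef]
        ext w
        simp only [Finset.mem_insert, Finset.mem_filter]
        constructor
        · rintro ⟨(rfl | hwR), hle⟩
          · exact Or.inl rfl
          · right
            refine ⟨hwR, lt_of_le_of_ne hle (fun heq => ?_)⟩
            have hwu : w = u := π.injective heq
            exact huR u (hwu ▸ hwR)
        · rintro (rfl | ⟨hwR, hlt⟩)
          · exact ⟨Or.inl rfl, le_refl _⟩
          · exact ⟨Or.inr hwR, hlt.le⟩
      have hrkval : rk π (A u) u = ((R u).filter (fun w => π w < π u)).card + 1 := by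
        show ((A u).filter (fun w => π w ≤ π u)).card = _
        rw [hfilterA, Finset.card_insert_of_notMem]
        intro hu
        exact huR u (Finset.mem_of_mem_filter u hu)
      rw [hcardeq, hrkval]
      omega
    -- count per u
    have hcount : ∀ u : W, ((K u).card + 1) * cnt u ≤ φ u * N := by
      intro u
      have heq : Finset.univ.filter (fun π : W ≃ Fin (Fintype.card W) =>
          ((K u).filter (fun x => π (r u x) < π u)).card < φ u)
          = Finset.univ.filter (fun π : W ≃ Fin (Fintype.card W) => rk π (A u) u ≤ φ u) :=
        Finset.filter_congr (fun π _ => by rw [hevent])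
      rw [hcntdef]
      simp only
      rw [heq, ← hcardA u]
      exact count_rk_le (A u) (huA u) (φ u)
    -- real bound per u
    have hperu : ∀ u ∈ Hi, (cnt u : ℝ) ≤ (2 * ρ + ρ * (Pr u).card) * N := by
      intro u hu
      have hu2 : 2 ≤ φ u := by
        rw [hHidef] at hu
        exact (Finset.mem_filter.mp hu).2
      have hρd : 1 < ρ * (G.degree u : ℝ) := by
        have hlt : 1 < ⌈ρ * ((G.degree u : ℕ) : ℝ)⌉₊ := by
          have heq : φ u = ⌈ρ * ((G.degree u : ℕ) : ℝ)⌉₊ := rfl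
          omega
        exact_mod_cast (Nat.lt_ceil).mp hlt
      have hφle : (φ u : ℝ) ≤ ρ * (G.degree u : ℝ) + 1 := by
        have h0 : (0:ℝ) ≤ ρ * (G.degree u : ℝ) := by positivity
        have hc1 := Nat.ceil_lt_add_one h0
        have heq : φ u = ⌈ρ * ((G.degree u : ℕ) : ℝ)⌉₊ := rfl
        rw [heq]
        linarith
      have hcN : cnt u ≤ N := by
        rw [hcntdef, hNdef]
        exact le_trans (Finset.card_filter_le _ _) (le_of_eq (Finset.card_univ))
      exact aux_peru ρ hρ (cnt u) N (K u).card (Pr u).card (G.degree u) (φ u)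
        (hsplitdeg u) hρd hφle hcN (hcount u)
    -- sum over π of |Dπ|
    have hsum : ∑ π : W ≃ Fin (Fintype.card W), (Dπ π).card = ∑ u ∈ Hi, cnt u := by
      have h1 : ∀ π : W ≃ Fin (Fintype.card W), (Dπ π).card
          = ∑ u ∈ Hi, (if ((K u).filter (fun x => π (r u x) < π u)).card < φ u then 1 else 0) := by
        intro π
        rw [hDdef]
        exact Finset.card_filter _ _
      have h2 : ∀ u : W, cnt u
          = ∑ π : W ≃ Fin (Fintype.card W),
              (if ((K u).filter (fun x => π (r u x) < π u)).card < φ u then 1 else 0) := by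
        intro u
        rw [hcntdef]
        exact Finset.card_filter _ _
      calc ∑ π : W ≃ Fin (Fintype.card W), (Dπ π).card
          = ∑ π : W ≃ Fin (Fintype.card W), ∑ u ∈ Hi,
              (if ((K u).filter (fun x => π (r u x) < π u)).card < φ u then 1 else 0) :=
            Finset.sum_congr rfl (fun π _ => h1 π)
        _ = ∑ u ∈ Hi, ∑ π : W ≃ Fin (Fintype.card W),
              (if ((K u).filter (fun x => π (r u x) < π u)).card < φ u then 1 else 0) :=
            Finset.sum_comm
        _ = ∑ u ∈ Hi, cnt u := Finset.sum_congr rfl (fun u _ => (h2 u).symm)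
    -- private vertices are disjoint
    have hPsum : ∑ u ∈ Hi, (Pr u).card ≤ n - Hi.card := by
      have hdisj : ∀ u1 ∈ Hi, ∀ u2 ∈ Hi, u1 ≠ u2 → Disjoint (Pr u1) (Pr u2) := by
        intro u1 h1 u2 h2 hne
        rw [Finset.disjoint_left]
        intro x hx1 hx2
        rw [hPrdef] at hx1 hx2
        simp only [Finset.mem_filter, SimpleGraph.mem_neighborFinset] at hx1 hx2
        apply hx1.2
        rw [hPdef]
        exact Or.inr ⟨u2, h2, hne.symm, hx2.1⟩
      have hsub : Hi.biUnion Pr ⊆ Finset.univ \ Hi := by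
        intro x hx
        simp only [Finset.mem_biUnion] at hx
        obtain ⟨u, hu, hxu⟩ := hx
        rw [hPrdef] at hxu
        simp only [Finset.mem_filter] at hxu
        rw [Finset.mem_sdiff]
        refine ⟨Finset.mem_univ x, fun hxHi => ?_⟩
        apply hxu.2
        rw [hPdef]
        exact Or.inl hxHi
      calc ∑ u ∈ Hi, (Pr u).card = (Hi.biUnion Pr).card := (Finset.card_biUnion hdisj).symm
        _ ≤ (Finset.univ \ Hi).card := Finset.card_le_card hsub
        _ = n - Hi.card := by rw [Finset.card_sdiff_of_subset (Finset.subset_univ Hi), Finset.card_univ]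
    have hHin : Hi.card ≤ n := by
      rw [hn]; exact Finset.card_le_univ Hi
    have hPsumR : (∑ u ∈ Hi, ((Pr u).card : ℝ)) ≤ (n:ℝ) - Hi.card := by
      have hcast : ((∑ u ∈ Hi, (Pr u).card : ℕ) : ℝ) ≤ ((n - Hi.card : ℕ) : ℝ) :=
        Nat.cast_le.mpr hPsum
      rw [Nat.cast_sub hHin] at hcast
      rw [← Nat.cast_sum]
      exact hcast
    -- total bound
    have htotal : ∑ π : W ≃ Fin (Fintype.card W), ((Dπ π).card : ℝ)
        ≤ (N:ℝ) * ((2 + ε) * ρ * n) := by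
      have hcast : ∑ π : W ≃ Fin (Fintype.card W), ((Dπ π).card : ℝ)
          = ((∑ π : W ≃ Fin (Fintype.card W), (Dπ π).card : ℕ) : ℝ) := by
        rw [Nat.cast_sum]
      rw [hcast, hsum, Nat.cast_sum]
      have hstep : ∑ u ∈ Hi, ((cnt u : ℕ) : ℝ)
          ≤ ∑ u ∈ Hi, (2 * ρ + ρ * ((Pr u).card : ℝ)) * (N:ℝ) :=
        Finset.sum_le_sum hperu
      refine le_trans hstep ?_
      have hexp : ∑ u ∈ Hi, (2 * ρ + ρ * ((Pr u).card : ℝ)) * (N:ℝ)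
          = (2 * ρ * Hi.card + ρ * ∑ u ∈ Hi, ((Pr u).card : ℝ)) * (N:ℝ) := by
        rw [← Finset.sum_mul]
        congr 1
        rw [Finset.sum_add_distrib, Finset.sum_const, ← Finset.mul_sum, nsmul_eq_mul]
        ring
      rw [hexp, mul_comm ((N:ℝ)) ((2 + ε) * ρ * (n:ℝ))]
      apply mul_le_mul_of_nonneg_right _ (Nat.cast_nonneg N)
      exact aux_sizebound ρ ε hρ hε (Hi.card) (n:ℝ) (∑ u ∈ Hi, ((Pr u).card : ℝ))
        (Nat.cast_nonneg _) (Nat.cast_le.mpr hHin) hPsumR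
    -- pigeonhole: pick a good π
    have hEx : ∃ π : W ≃ Fin (Fintype.card W), ((Dπ π).card : ℝ) ≤ (2 + ε) * ρ * n := by
      by_contra hcon
      push_neg at hcon
      have hlt : ∀ π ∈ (Finset.univ : Finset (W ≃ Fin (Fintype.card W))),
          (2 + ε) * ρ * (n:ℝ) < ((Dπ π).card : ℝ) := fun π _ => hcon π
      have hsumlt : (N:ℝ) * ((2 + ε) * ρ * n)
          < ∑ π : W ≃ Fin (Fintype.card W), ((Dπ π).card : ℝ) := by
        have hne2 : (Finset.univ : Finset (W ≃ Fin (Fintype.card W))).Nonempty :=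
          Finset.univ_nonempty
        have hss := Finset.sum_lt_sum_of_nonempty hne2 hlt
        rw [Finset.sum_const, Finset.card_univ, nsmul_eq_mul] at hss
        exact hss
      exact absurd htotal (not_le.mpr hsumlt)
    obtain ⟨π₀, hπ₀⟩ := hEx
    refine ⟨Dπ π₀, ?_, ?_⟩
    · apply Finset.eq_univ_of_forall
      intro w
      rw [Hcl, Finset.mem_filter]
      refine ⟨Finset.mem_univ w, fun S hDS hcl => ?_⟩
      rw [part1 π₀ S hDS hcl]
      exact Finset.mem_univ w
    · exact hπ₀
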